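/- Let G be a countably infinite semigroup acting minimally by continuous maps on a compact metric space X which is not finite, and let μ be a G-invariant Borel probability measure on X. Then for every c ∈ (0,1) there exists a nowhere dense Borel set E ⊆ X with μ(E) = c. -/

import Mathlib

open MeasureTheory

/-- Intermediate value property for `Iic`-measures of an atomless finite measure on `ℝ`. -/
lemma aux_exists_Iic_measure_eq {ν : Measure ℝ} [IsFiniteMeasure ν] [NullSingletonClass ν]
    {r : ENNReal} (h0 : 0 < r) (hr : r < ν Set.univ) :
    ∃ t : ℝ, ν (Set.Iic t) = r := by
  set S : Set ℝ := {t | r ≤ ν (Set.Iic t)} with hS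
  -- S is nonempty
  have htop : Filter.Tendsto (fun n : ℕ => ν (Set.Iic (n : ℝ))) Filter.atTop
      (nhds (ν Set.univ)) := by
    have hU : (⋃ n : ℕ, Set.Iic ((n : ℝ))) = Set.univ := by
      ext x
      simpa using (exists_nat_ge x).imp fun n hn => hn
    have := tendsto_measure_iUnion_atTop (μ := ν)
      (s := fun n : ℕ => Set.Iic ((n : ℝ)))
      (fun a b hab => Set.Iic_subset_Iic.2 (by exact_mod_cast hab))
    rwa [hU] at this
  obtain ⟨n₀, hn₀⟩ : ∃ n : ℕ, r < ν (Set.Iic ((n : ℝ))) :=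
    ((htop.eventually (eventually_gt_nhds hr)).exists)
  have hSne : S.Nonempty := ⟨(n₀ : ℝ), hn₀.le⟩
  -- S is bounded below
  have hbot : Filter.Tendsto (fun n : ℕ => ν (Set.Iic (-(n : ℝ)))) Filter.atTop
      (nhds 0) := by
    have hI : (⋂ n : ℕ, Set.Iic (-(n : ℝ))) = ∅ := by
      ext x
      simp only [Set.mem_iInter, Set.mem_Iic, Set.mem_empty_iff_false, iff_false, not_forall]
      obtain ⟨n, hn⟩ := exists_nat_gt (-x)
      exact ⟨n, by linarith⟩
    have := tendsto_measure_iInter_atTop (μ := ν)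
      (s := fun n : ℕ => Set.Iic (-(n : ℝ)))
      (fun n => measurableSet_Iic.nullMeasurableSet)
      (fun a b hab => Set.Iic_subset_Iic.2 (by exact_mod_cast neg_le_neg (by exact_mod_cast hab)))
      ⟨0, measure_ne_top _ _⟩
    rwa [hI, measure_empty] at this
  obtain ⟨n₁, hn₁⟩ : ∃ n : ℕ, ν (Set.Iic (-(n : ℝ))) < r :=
    ((hbot.eventually (eventually_lt_nhds h0)).exists)
  have hSbdd : BddBelow S := by
    refine ⟨-(n₁ : ℝ), fun s hs => ?_⟩
    by_contra hlt
    push_neg at hlt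
    exact absurd (hs.trans (measure_mono (Set.Iic_subset_Iic.2 hlt.le))) (not_le_of_gt hn₁)
  set t := sInf S with ht
  refine ⟨t, le_antisymm ?_ ?_⟩
  · -- ν (Iic t) ≤ r
    have hlow : ν (Set.Iio t) ≤ r := by
      have hU : (⋃ n : ℕ, Set.Iic (t - 1 / ((n : ℝ) + 1))) = Set.Iio t := by
        ext x
        simp only [Set.mem_iUnion, Set.mem_Iic, Set.mem_Iio]
        constructor
        · rintro ⟨n, hn⟩
          have : (0 : ℝ) < 1 / ((n : ℝ) + 1) := by positivity
          linarith
        · intro hx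
          obtain ⟨n, hn⟩ := exists_nat_one_div_lt (show (0:ℝ) < t - x by linarith)
          exact ⟨n, by linarith⟩
      have hmono : Monotone fun n : ℕ => Set.Iic (t - 1 / ((n : ℝ) + 1)) := by
        intro a b hab
        refine Set.Iic_subset_Iic.2 ?_
        have h1 : (a : ℝ) + 1 ≤ (b : ℝ) + 1 := by exact_mod_cast Nat.succ_le_succ hab
        have h2 : 1 / ((b : ℝ) + 1) ≤ 1 / ((a : ℝ) + 1) :=
          one_div_le_one_div_of_le (by positivity) h1
        linarith
      have htend := tendsto_measure_iUnion_atTop (μ := ν) hmono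
      rw [hU] at htend
      refine le_of_tendsto htend (Filter.Eventually.of_forall fun n => ?_)
      by_contra hgt
      push_neg at hgt
      have hmem : t - 1 / ((n : ℝ) + 1) ∈ S := hgt.le
      have : t ≤ t - 1 / ((n : ℝ) + 1) := csInf_le hSbdd hmem
      have hpos : (0 : ℝ) < 1 / ((n : ℝ) + 1) := by positivity
      linarith
    calc ν (Set.Iic t) = ν (Set.Iio t ∪ {t}) := by rw [Set.Iio_union_right]
      _ ≤ ν (Set.Iio t) + ν {t} := measure_union_le _ _
      _ = ν (Set.Iio t) := by rw [measure_singleton, add_zero]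
      _ ≤ r := hlow
  · -- r ≤ ν (Iic t)
    have hI : (⋂ n : ℕ, Set.Iic (t + 1 / ((n : ℝ) + 1))) = Set.Iic t := by
      ext x
      simp only [Set.mem_iInter, Set.mem_Iic]
      constructor
      · intro h
        by_contra hx
        push_neg at hx
        obtain ⟨n, hn⟩ := exists_nat_one_div_lt (show (0:ℝ) < x - t by linarith)
        have := h n
        linarith
      · intro hx n
        have : (0 : ℝ) < 1 / ((n : ℝ) + 1) := by positivity
        linarith
    have hanti : Antitone fun n : ℕ => Set.Iic (t + 1 / ((n : ℝ) + 1)) := by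
      intro a b hab
      refine Set.Iic_subset_Iic.2 ?_
      have h1 : (a : ℝ) + 1 ≤ (b : ℝ) + 1 := by exact_mod_cast Nat.succ_le_succ hab
      have h2 : 1 / ((b : ℝ) + 1) ≤ 1 / ((a : ℝ) + 1) :=
        one_div_le_one_div_of_le (by positivity) h1
      linarith
    have htend := tendsto_measure_iInter_atTop (μ := ν)
      (fun n => measurableSet_Iic.nullMeasurableSet) hanti ⟨0, measure_ne_top _ _⟩
    rw [hI] at htend
    refine ge_of_tendsto htend (Filter.Eventually.of_forall fun n => ?_)
    have hpos : (0 : ℝ) < 1 / ((n : ℝ) + 1) := by positivity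
    obtain ⟨s, hsS, hst⟩ := (csInf_lt_iff hSbdd hSne).1
      (show sInf S < t + 1 / ((n : ℝ) + 1) by rw [← ht]; linarith)
    exact le_trans hsS (measure_mono (Set.Iic_subset_Iic.2 hst.le))

/-- Let a countably infinite semigroup `G` act minimally by continuous maps
on an infinite compact metric space `X`, and let `μ` be a `G`-invariant Borel
probability measure on `X`.  Then for every `c ∈ (0,1)` there is a nowhere
dense Borel set `E ⊆ X` with `μ(E) = c`. -/
theorem exists_nowhereDense_of_measure {G X : Type*} [Semigroup G]
    [Countable G] [Infinite G]
    [MetricSpace X] [CompactSpace X] [Infinite X]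
    [MeasurableSpace X] [BorelSpace X]
    [SMul G X] [IsScalarTower G G X] [ContinuousConstSMul G X]
    (hmin : ∀ x : X, Dense (Set.range fun g : G => g • x))
    (μ : Measure X) [IsProbabilityMeasure μ]
    (hinv : ∀ (g : G) (B : Set X), MeasurableSet B → μ ((fun x => g • x) ⁻¹' B) = μ B)
    (c : ℝ) (hc : c ∈ Set.Ioo (0 : ℝ) 1) :
    ∃ E : Set X, IsNowhereDense E ∧ MeasurableSet E ∧ μ E = ENNReal.ofReal c := by
  -- Step 1: μ has no atoms.
  have hatom : ∀ x : X, μ {x} = 0 := by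
    intro x
    by_contra h
    have ha : 0 < μ {x} := pos_iff_ne_zero.2 h
    set R := Set.range fun g : G => g • x with hR
    have hRinf : R.Infinite := by
      intro hfin
      have hcl : closure R = R := hfin.isClosed.closure_eq
      have huniv : R = Set.univ := by
        have := (hmin x).closure_eq
        rw [← hR] at this
        rw [← hcl, this]
      have : (Set.univ : Set X).Finite := huniv ▸ hfin
      exact (Set.infinite_univ (α := X)) this
    have hb : ∀ y ∈ R, μ {x} ≤ μ {y} := by
      rintro y ⟨g, rfl⟩
      have hpre := hinv g {g • x} (measurableSet_singleton _)
      calc μ {x} ≤ μ ((fun z => g • z) ⁻¹' {g • x}) :=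
            measure_mono (by intro z hz; simp_all)
        _ = μ {g • x} := hpre
    obtain ⟨n, hn⟩ := ENNReal.exists_nat_gt
      (show (μ {x})⁻¹ ≠ ⊤ from ENNReal.inv_ne_top.2 ha.ne')
    obtain ⟨t, htR, htcard⟩ := hRinf.exists_subset_card_eq n
    have hninv : ((n : ENNReal))⁻¹ < μ {x} := ENNReal.inv_lt_iff_inv_lt.1 hn
    have hn0 : (n : ENNReal) ≠ 0 := (zero_le.trans_lt hn).ne'
    have hsum : (n : ENNReal) * μ {x} ≤ μ (↑t : Set X) := by
      have hdisj : (↑t : Set X).PairwiseDisjoint fun y => ({y} : Set X) := by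
        intro a _ b _ hab
        simp [Set.disjoint_singleton, hab]
      have hmeq : μ (↑t : Set X) = ∑ y ∈ t, μ {y} := by
        rw [show (↑t : Set X) = ⋃ y ∈ t, ({y} : Set X) from
          (Set.biUnion_of_singleton _).symm]
        exact measure_biUnion_finset hdisj fun y _ => measurableSet_singleton y
      have hsle : t.card • μ {x} ≤ ∑ y ∈ t, μ {y} :=
        Finset.card_nsmul_le_sum t _ _ fun y hy => hb y (htR hy)
      rw [hmeq, ← htcard]
      simpa [nsmul_eq_mul] using hsle
    have h1lt : (1 : ENNReal) < (n : ENNReal) * μ {x} := by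
      have := ENNReal.mul_lt_mul_right hn0 (ENNReal.natCast_ne_top n) hninv
      rwa [ENNReal.mul_inv_cancel hn0 (ENNReal.natCast_ne_top n)] at this
    have hle1 : μ (↑t : Set X) ≤ 1 := prob_le_one
    exact absurd (h1lt.trans_le (hsum.trans hle1)) (lt_irrefl 1)
  haveI hNA : NullSingletonClass μ := ⟨hatom⟩
  -- Step 2: X is uncountable.
  have hXc : ¬ Countable X := by
    intro hcnt
    have h0 : μ Set.univ = 0 := Set.countable_univ.measure_zero μ
    rw [measure_univ] at h0
    exact one_ne_zero h0
  -- Step 3: a closed nowhere dense set K with μ K > c.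
  obtain ⟨D, hDc, hDd⟩ := TopologicalSpace.exists_countable_dense X
  have hD0 : μ D = 0 := hDc.measure_zero μ
  have hcpos : 0 < ENNReal.ofReal c := ENNReal.ofReal_pos.2 hc.1
  have hclt1 : ENNReal.ofReal c < 1 := ENNReal.ofReal_lt_one.2 hc.2
  have hrpos : (0 : ENNReal) < 1 - ENNReal.ofReal c := tsub_pos_iff_lt.2 hclt1
  obtain ⟨U, hDU, hUopen, hUlt⟩ :=
    D.exists_isOpen_lt_of_lt (1 - ENNReal.ofReal c) (by rw [hD0]; exact hrpos)
  set K := Uᶜ with hK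
  have hKclosed : IsClosed K := hUopen.isClosed_compl
  have hKmeas : MeasurableSet K := hKclosed.measurableSet
  have hKint : interior K = ∅ := by
    by_contra hne
    obtain ⟨x, hxi, hxD⟩ := hDd.inter_open_nonempty (interior K) isOpen_interior
      (Set.nonempty_iff_ne_empty.2 hne)
    exact (interior_subset hxi) (hDU hxD)
  have hKc : ENNReal.ofReal c < μ K := by
    have hadd : μ U + ENNReal.ofReal c < 1 :=
      (ENNReal.cancel_of_ne ENNReal.ofReal_ne_top).lt_tsub_iff_right.1 hUlt
    have hcompl : μ K = 1 - μ U := by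
      rw [hK, measure_compl hUopen.measurableSet (measure_ne_top μ U), measure_univ]
    rw [hcompl]
    exact (ENNReal.cancel_of_ne (measure_ne_top μ U)).lt_tsub_iff_right.2
      (by rwa [add_comm] at hadd)
  -- Step 4: transfer to ℝ via the Borel isomorphism theorem.
  have hRc : ¬ Countable ℝ := fun h => Cardinal.not_countable_real Set.countable_univ
  let e : X ≃ᵐ ℝ := PolishSpace.measurableEquivOfNotCountable hXc hRc
  set ν : Measure ℝ := Measure.map e (μ.restrict K) with hν
  haveI : IsFiniteMeasure (μ.restrict K) := inferInstance
  haveI hνfin : IsFiniteMeasure ν := by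
    rw [hν]
    exact Measure.isFiniteMeasure_map _ _
  haveI hνNA : NullSingletonClass ν := by
    constructor
    intro y
    rw [hν, Measure.map_apply e.measurable (measurableSet_singleton y)]
    have hpre : e ⁻¹' {y} = {e.symm y} := by
      ext z
      simp only [Set.mem_preimage, Set.mem_singleton_iff]
      constructor
      · intro hz
        rw [← hz, MeasurableEquiv.symm_apply_apply]
      · intro hz
        rw [hz, MeasurableEquiv.apply_symm_apply]
    rw [hpre]
    exact measure_singleton _
  have hνuniv : ν Set.univ = μ K := by
    rw [hν, Measure.map_apply e.measurable MeasurableSet.univ, Set.preimage_univ,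
      Measure.restrict_apply MeasurableSet.univ, Set.univ_inter]
  obtain ⟨s, hs⟩ := aux_exists_Iic_measure_eq (ν := ν) hcpos (by rwa [hνuniv])
  refine ⟨e ⁻¹' Set.Iic s ∩ K, ?_, (e.measurable measurableSet_Iic).inter hKmeas, ?_⟩
  · -- nowhere dense
    have hsubK : closure (e ⁻¹' Set.Iic s ∩ K) ⊆ K :=
      closure_minimal Set.inter_subset_right hKclosed
    have : interior (closure (e ⁻¹' Set.Iic s ∩ K)) ⊆ interior K := interior_mono hsubK
    rw [hKint] at this
    exact Set.eq_empty_of_subset_empty this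
  · rw [← hs, hν, Measure.map_apply e.measurable measurableSet_Iic,
      Measure.restrict_apply (e.measurable measurableSet_Iic)]
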